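/- arXiv:2504.17477 — 3 statements merged into one kernel-verified Lean document; each statement's English description precedes it below -/
import Mathlib

section
/- Let g : ℝ^d → [0,∞) be measurable, let β > 1 and α > d(β−1). Then ∫ g(x) dx ≤ C_{α,β,d} (∫ g(x)^β dx)^{(α−d(β−1))/(αβ)} (∫ |x|^α g(x)^β dx)^{d(β−1)/(αβ)}, where C_{α,β,d} = (α/(d(β−1)))^{1/β} (d(β−1)/(α−d(β−1)))^{(α−d(β−1))/(αβ)} ((2π^{d/2}/Γ(d/2)) · (1/α) · I_{α,β,d})^{(β−1)/β} and I_{α,β,d} = ∫₀^∞ s^{d/α−1}/(1+s)^{1/(β−1)} ds. -/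
open MeasureTheory ProbabilityTheory Real Filter Set
open scoped ENNReal NNReal

noncomputable def WpPow {d : ℕ} (p : ℝ) (μ ν : Measure (EuclideanSpace ℝ (Fin d))) : ℝ :=
  sInf {c : ℝ | ∃ cpl : Measure (EuclideanSpace ℝ (Fin d) × EuclideanSpace ℝ (Fin d)),
    IsProbabilityMeasure cpl ∧ cpl.map Prod.fst = μ ∧ cpl.map Prod.snd = ν ∧
    c = ∫ z, ‖z.1 - z.2‖ ^ p ∂cpl}

/-- The p-Wasserstein distance. -/
noncomputable def Wp {d : ℕ} (p : ℝ) (μ ν : Measure (EuclideanSpace ℝ (Fin d))) : ℝ :=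
  (WpPow p μ ν) ^ (1 / p)

/-- Density of the centered Gaussian with covariance σ²I_d. -/
noncomputable def gaussianPdf (d : ℕ) (σ : ℝ) (x : EuclideanSpace ℝ (Fin d)) : ℝ :=
  (2 * Real.pi) ^ (-(d : ℝ) / 2) * σ ^ (-(d : ℝ)) * Real.exp (-‖x‖ ^ 2 / (2 * σ ^ 2))

/-- The centered Gaussian measure with covariance σ²I_d on ℝ^d. -/
noncomputable def gaussianMeasure (d : ℕ) (σ : ℝ) : Measure (EuclideanSpace ℝ (Fin d)) :=
  volume.withDensity (fun x => ENNReal.ofReal (gaussianPdf d σ x))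

/-- Convolution of two measures on ℝ^d. -/
noncomputable def mconv {d : ℕ} (μ ν : Measure (EuclideanSpace ℝ (Fin d))) :
    Measure (EuclideanSpace ℝ (Fin d)) :=
  (μ.prod ν).map (fun z => z.1 + z.2)

/-- Empirical measure of the points X 0, ..., X (N-1). -/
noncomputable def empMeasure {d : ℕ} (N : ℕ) (X : ℕ → EuclideanSpace ℝ (Fin d)) :
    Measure (EuclideanSpace ℝ (Fin d)) :=
  ((N : ℝ≥0∞))⁻¹ • ∑ k ∈ Finset.range N, Measure.dirac (X k)

open Metric MeasureTheory.Measure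

local notation "dim" => Module.finrank ℝ

lemma carlson_aux_cont {p q c m : ℝ} (hm : 0 < m) :
    ContinuousOn (fun y : ℝ => y ^ p * (1 + m * y ^ q) ^ (-c)) (Ioi (0:ℝ)) := by
  intro y hy
  have hy0 : (0:ℝ) < y := hy
  have h1 : (0:ℝ) < 1 + m * y ^ q := by positivity
  have hin : ContinuousAt (fun x : ℝ => 1 + m * x ^ q) y := by
    have : ContinuousAt (fun x : ℝ => x ^ q) y :=
      Real.continuousAt_rpow_const y q (Or.inl hy0.ne')
    fun_prop
  apply ContinuousWithinAt.mul
  · exact (Real.continuousAt_rpow_const y p (Or.inl hy0.ne')).continuousWithinAt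
  · exact (hin.rpow_const (Or.inl h1.ne')).continuousWithinAt

lemma carlson_aux_integrable {p q c m : ℝ} (hp : -1 < p) (hq : 0 < q) (hc : 0 ≤ c)
    (hm : 0 < m) (hpqc : p - q * c < -1) :
    IntegrableOn (fun y : ℝ => y ^ p * (1 + m * y ^ q) ^ (-c)) (Ioi (0:ℝ)) := by
  have hmeas : AEStronglyMeasurable (fun y : ℝ => y ^ p * (1 + m * y ^ q) ^ (-c))
      (volume.restrict (Ioi (0:ℝ))) :=
    (carlson_aux_cont hm).aestronglyMeasurable measurableSet_Ioi
  have h01 : IntegrableOn (fun y : ℝ => y ^ p * (1 + m * y ^ q) ^ (-c)) (Ioc (0:ℝ) 1) := by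
    refine Integrable.mono' (g := fun y : ℝ => y ^ p) ?_ ?_ ?_
    · have := (intervalIntegral.intervalIntegrable_rpow' (a := 0) (b := 1) hp)
      rwa [intervalIntegrable_iff_integrableOn_Ioc_of_le zero_le_one] at this
    · exact hmeas.mono_set Ioc_subset_Ioi_self
    · filter_upwards [ae_restrict_mem measurableSet_Ioc] with y hy
      have hy0 : (0:ℝ) < y := hy.1
      have h1 : (1:ℝ) ≤ 1 + m * y ^ q := by
        nlinarith [Real.rpow_pos_of_pos hy0 q, hm]
      have h2 : (1 + m * y ^ q) ^ (-c) ≤ 1 :=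
        Real.rpow_le_one_of_one_le_of_nonpos h1 (neg_nonpos.mpr hc)
      have h3 : 0 ≤ (1 + m * y ^ q) ^ (-c) := Real.rpow_nonneg (by linarith) _
      have h4 : 0 ≤ y ^ p := Real.rpow_nonneg hy0.le _
      rw [Real.norm_eq_abs, abs_of_nonneg (mul_nonneg h4 h3)]
      calc y ^ p * (1 + m * y ^ q) ^ (-c) ≤ y ^ p * 1 := by nlinarith
        _ = y ^ p := mul_one _
  have h1i : IntegrableOn (fun y : ℝ => y ^ p * (1 + m * y ^ q) ^ (-c)) (Ioi (1:ℝ)) := by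
    refine Integrable.mono' (g := fun y : ℝ => m ^ (-c) * y ^ (p - q * c)) ?_ ?_ ?_
    · exact (integrableOn_Ioi_rpow_of_lt hpqc zero_lt_one).const_mul _
    · exact hmeas.mono_set (Ioi_subset_Ioi zero_le_one)
    · filter_upwards [ae_restrict_mem measurableSet_Ioi] with y hy
      have hy0 : (0:ℝ) < y := lt_trans zero_lt_one hy
      have hyq : (0:ℝ) < m * y ^ q := by positivity
      have h1 : m * y ^ q ≤ 1 + m * y ^ q := by linarith
      have h2 : (1 + m * y ^ q) ^ (-c) ≤ (m * y ^ q) ^ (-c) :=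
        Real.rpow_le_rpow_of_nonpos hyq h1 (neg_nonpos.mpr hc)
      have h4 : 0 ≤ y ^ p := Real.rpow_nonneg hy0.le _
      have h5 : 0 ≤ (1 + m * y ^ q) ^ (-c) := Real.rpow_nonneg (by linarith) _
      rw [Real.norm_eq_abs, abs_of_nonneg (mul_nonneg h4 h5)]
      calc y ^ p * (1 + m * y ^ q) ^ (-c) ≤ y ^ p * (m * y ^ q) ^ (-c) := by nlinarith
        _ = m ^ (-c) * y ^ (p - q * c) := by
            rw [Real.mul_rpow hm.le (Real.rpow_nonneg hy0.le _), ← Real.rpow_mul hy0.le,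
              show p - q * c = p + q * (-c) by ring, Real.rpow_add hy0]
            ring
  have : Ioi (0:ℝ) = Ioc (0:ℝ) 1 ∪ Ioi (1:ℝ) := (Ioc_union_Ioi_eq_Ioi zero_le_one).symm
  rw [this]
  exact h01.union h1i

lemma lintegral_fun_norm_addHaar' {E : Type*} [NormedAddCommGroup E] [NormedSpace ℝ E]
    [MeasurableSpace E] [BorelSpace E] [Nontrivial E] [FiniteDimensional ℝ E]
    (μ : Measure E) [μ.IsAddHaarMeasure] (f : ℝ → ℝ≥0∞) (hf : Measurable f) :
    ∫⁻ x, f ‖x‖ ∂μ =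
      μ.toSphere univ * ∫⁻ y in Ioi (0:ℝ), ENNReal.ofReal (y ^ (dim E - 1)) * f y := by
  have hm2 : Measurable (fun z : sphere (0:E) 1 × Ioi (0:ℝ) => f z.2.1) :=
    hf.comp (measurable_subtype_coe.comp measurable_snd)
  calc
    ∫⁻ x, f ‖x‖ ∂μ = ∫⁻ x : ({(0:E)}ᶜ : Set E), f ‖(x:E)‖ ∂(μ.comap (↑)) := by
      rw [lintegral_subtype_comap (measurableSet_singleton _).compl (fun x => f ‖x‖),
        MeasureTheory.restrict_compl_singleton]
    _ = ∫⁻ x : sphere (0 : E) 1 × Ioi (0 : ℝ), f x.2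
        ∂(μ.toSphere.prod (.volumeIoiPow (dim E - 1))) := by
      rw [← μ.measurePreserving_homeomorphUnitSphereProd.lintegral_comp hm2]
      simp [homeomorphUnitSphereProd, homeomorphSphereProd]
    _ = μ.toSphere univ * ∫⁻ y : Ioi (0:ℝ), f y ∂(Measure.volumeIoiPow (dim E - 1)) := by
      rw [lintegral_prod _ hm2.aemeasurable]
      simp [lintegral_const]
      ring
    _ = μ.toSphere univ * ∫⁻ y in Ioi (0:ℝ), ENNReal.ofReal (y ^ (dim E - 1)) * f y := by
      congr 1
      have hd : Measurable (fun r : (Ioi (0:ℝ)) => ENNReal.ofReal ((r:ℝ) ^ (dim E - 1))) :=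
        (measurable_subtype_coe.pow_const _).ennreal_ofReal
      have hfc : Measurable (fun r : (Ioi (0:ℝ)) => f r) := hf.comp measurable_subtype_coe
      rw [Measure.volumeIoiPow, lintegral_withDensity_eq_lintegral_mul _ hd hfc]
      exact lintegral_subtype_comap measurableSet_Ioi
        (fun a : ℝ => ENNReal.ofReal (a ^ (dim E - 1)) * f a)

lemma lintegral_fun_norm_euclidean {d : ℕ} (hd : 1 ≤ d) (f : ℝ → ℝ≥0∞) (hf : Measurable f) :
    ∫⁻ x : EuclideanSpace ℝ (Fin d), f ‖x‖ =
      ENNReal.ofReal (2 * π ^ ((d:ℝ) / 2) / Real.Gamma (d / 2)) *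
        ∫⁻ y in Ioi (0:ℝ), ENNReal.ofReal (y ^ (d - 1)) * f y := by
  haveI : Nonempty (Fin d) := ⟨⟨0, hd⟩⟩
  haveI : Nontrivial (EuclideanSpace ℝ (Fin d)) := by infer_instance
  have hdim : dim (EuclideanSpace ℝ (Fin d)) = d := finrank_euclideanSpace_fin
  rw [lintegral_fun_norm_addHaar' (volume : Measure (EuclideanSpace ℝ (Fin d))) f hf, hdim]
  congr 1
  rw [Measure.toSphere_apply_univ, hdim, EuclideanSpace.volume_ball]
  have hd2 : (0:ℝ) < (d:ℝ) / 2 := by positivity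
  have hΓ : (0:ℝ) < Real.Gamma ((d:ℝ) / 2) := Real.Gamma_pos_of_pos hd2
  have hsq : (Real.sqrt π) ^ d = π ^ ((d:ℝ)/2) := by
    rw [Real.sqrt_eq_rpow, ← Real.rpow_natCast (π ^ ((1:ℝ)/2)) d, ← Real.rpow_mul pi_pos.le]
    ring_nf
  have hcard : Fintype.card (Fin d) = d := Fintype.card_fin d
  simp only [hcard, ENNReal.ofReal_one, one_pow, one_mul]
  rw [← ENNReal.ofReal_natCast d, ← ENNReal.ofReal_mul (by positivity)]
  congr 1
  rw [hsq, Real.Gamma_add_one hd2.ne']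
  have hπ : (0:ℝ) < π ^ ((d:ℝ)/2) := Real.rpow_pos_of_pos pi_pos _
  field_simp

lemma carlson_onedim {d : ℕ} (hd : 1 ≤ d) {α β lam : ℝ} (hβ : 1 < β)
    (hα : (d : ℝ) * (β - 1) < α) (hlam : 0 < lam) :
    ∫ y in Ioi (0:ℝ), y ^ ((d:ℝ) - 1) * (1 + lam ^ (-α) * y ^ α) ^ (-(1/(β-1))) =
      lam ^ (d:ℝ) * ((1/α) * ∫ s in Ioi (0:ℝ), s ^ ((d:ℝ)/α - 1) / (1 + s) ^ (1/(β-1))) := by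
  have hβ1 : (0:ℝ) < β - 1 := by linarith
  have hd0 : (0:ℝ) < d := by exact_mod_cast hd
  have hα0 : (0:ℝ) < α := lt_trans (by positivity) hα
  have hm : (0:ℝ) < lam ^ (-α) := Real.rpow_pos_of_pos hlam _
  set c : ℝ := 1/(β-1) with hc
  have hc0 : 0 < c := by positivity
  set m : ℝ := lam ^ (-α) with hmdef
  -- Step 1: rpow substitution
  set G : ℝ → ℝ := fun u => (1/α) * (u ^ ((d:ℝ)/α - 1) * (1 + m * u) ^ (-c)) with hG
  have sub1 : ∫ y in Ioi (0:ℝ), y ^ ((d:ℝ) - 1) * (1 + m * y ^ α) ^ (-c)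
      = ∫ u in Ioi (0:ℝ), G u := by
    rw [← integral_comp_rpow_Ioi G hα0.ne']
    refine setIntegral_congr_fun measurableSet_Ioi (fun x hx => ?_)
    have hx0 : (0:ℝ) < x := hx
    have hxα : (0:ℝ) < x ^ α := Real.rpow_pos_of_pos hx0 _
    simp only [hG, smul_eq_mul]
    rw [← Real.rpow_mul hx0.le, abs_of_pos hα0,
      show α * ((d:ℝ)/α - 1) = (d:ℝ) - α by field_simp]
    rw [show α * x ^ (α - 1) * ((1/α) * (x ^ ((d:ℝ) - α) * (1 + m * x ^ α) ^ (-c)))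
        = (x ^ (α-1) * x ^ ((d:ℝ) - α)) * (α * (1/α)) * (1 + m * x ^ α) ^ (-c) by ring,
      ← Real.rpow_add hx0, mul_one_div_cancel hα0.ne', mul_one]
    congr 2
    ring
  -- Step 2: scaling
  have hb : (0:ℝ) < lam ^ α := Real.rpow_pos_of_pos hlam _
  set F : ℝ → ℝ := fun u => u ^ ((d:ℝ)/α - 1) * (1 + m * u) ^ (-c) with hF
  have sub2 : ∫ u in Ioi (0:ℝ), F u
      = lam ^ α * ∫ v in Ioi (0:ℝ), F (lam ^ α * v) := by
    rw [integral_comp_mul_left_Ioi F 0 hb, mul_zero, smul_eq_mul, ← mul_assoc,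
      mul_inv_cancel₀ hb.ne', one_mul]
  have sub3 : ∫ v in Ioi (0:ℝ), F (lam ^ α * v)
      = lam ^ ((d:ℝ) - α) * ∫ v in Ioi (0:ℝ), v ^ ((d:ℝ)/α - 1) * (1 + v) ^ (-c) := by
    rw [← integral_const_mul]
    refine setIntegral_congr_fun measurableSet_Ioi (fun v hv => ?_)
    have hv0 : (0:ℝ) < v := hv
    simp only [hF]
    have h1 : m * (lam ^ α * v) = v := by
      rw [hmdef, ← mul_assoc, ← Real.rpow_add hlam, neg_add_cancel, Real.rpow_zero, one_mul]
    have h2 : (lam ^ α * v) ^ ((d:ℝ)/α - 1) = lam ^ ((d:ℝ) - α) * v ^ ((d:ℝ)/α - 1) := by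
      rw [Real.mul_rpow hb.le hv0.le, ← Real.rpow_mul hlam.le]
      congr 2
      field_simp
    rw [h1, h2]
    ring
  -- Step 3: integrand of I
  have sub4 : ∫ v in Ioi (0:ℝ), v ^ ((d:ℝ)/α - 1) * (1 + v) ^ (-c)
      = ∫ s in Ioi (0:ℝ), s ^ ((d:ℝ)/α - 1) / (1 + s) ^ c := by
    refine setIntegral_congr_fun measurableSet_Ioi (fun v hv => ?_)
    have hv0 : (0:ℝ) < v := hv
    rw [Real.rpow_neg (by linarith)]
    ring
  calc ∫ y in Ioi (0:ℝ), y ^ ((d:ℝ) - 1) * (1 + m * y ^ α) ^ (-c)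
      = ∫ u in Ioi (0:ℝ), G u := sub1
    _ = (1/α) * ∫ u in Ioi (0:ℝ), F u := by rw [hG, integral_const_mul]
    _ = (1/α) * (lam ^ α * (lam ^ ((d:ℝ) - α) *
          ∫ s in Ioi (0:ℝ), s ^ ((d:ℝ)/α - 1) / (1 + s) ^ c)) := by
        rw [sub2, sub3, sub4]
    _ = lam ^ (d:ℝ) * ((1/α) * ∫ s in Ioi (0:ℝ), s ^ ((d:ℝ)/α - 1) / (1 + s) ^ c) := by
        have hpow : lam ^ α * lam ^ ((d:ℝ) - α) = lam ^ (d:ℝ) := by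
          rw [← Real.rpow_add hlam]; norm_num
        rw [← hpow]; ring

lemma carlson_weight {d : ℕ} (hd : 1 ≤ d) {α β lam : ℝ} (hβ : 1 < β)
    (hα : (d : ℝ) * (β - 1) < α) (hlam : 0 < lam) :
    ∫⁻ x : EuclideanSpace ℝ (Fin d),
        ENNReal.ofReal ((1 + lam ^ (-α) * ‖x‖ ^ α) ^ (-(1/(β-1)))) =
      ENNReal.ofReal ((2 * π ^ ((d:ℝ) / 2) / Real.Gamma (d / 2)) * (lam ^ (d:ℝ) *
        ((1/α) * ∫ s in Ioi (0:ℝ), s ^ ((d:ℝ)/α - 1) / (1 + s) ^ (1/(β-1))))) := by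
  have hβ1 : (0:ℝ) < β - 1 := by linarith
  have hd0 : (0:ℝ) < d := by exact_mod_cast hd
  have hα0 : (0:ℝ) < α := lt_trans (by positivity) hα
  have hm : (0:ℝ) < lam ^ (-α) := Real.rpow_pos_of_pos hlam _
  have hc0 : (0:ℝ) < 1/(β-1) := by positivity
  set f : ℝ → ℝ≥0∞ :=
    fun y => ENNReal.ofReal ((1 + lam ^ (-α) * y ^ α) ^ (-(1/(β-1)))) with hfdef
  have hf : Measurable f := by
    rw [hfdef]; fun_prop
  have key := lintegral_fun_norm_euclidean hd f hf
  rw [hfdef] at key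
  rw [key]
  have inner : ∫⁻ y in Ioi (0:ℝ), ENNReal.ofReal (y ^ (d - 1)) * f y
      = ENNReal.ofReal (lam ^ (d:ℝ) *
        ((1/α) * ∫ s in Ioi (0:ℝ), s ^ ((d:ℝ)/α - 1) / (1 + s) ^ (1/(β-1)))) := by
    have step1 : ∫⁻ y in Ioi (0:ℝ), ENNReal.ofReal (y ^ (d - 1)) * f y
        = ∫⁻ y in Ioi (0:ℝ),
            ENNReal.ofReal (y ^ ((d:ℝ) - 1) * (1 + lam ^ (-α) * y ^ α) ^ (-(1/(β-1)))) := by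
      refine setLIntegral_congr_fun measurableSet_Ioi ?_
      intro y hy
      have hy0 : (0:ℝ) < y := hy
      rw [hfdef]
      beta_reduce
      rw [← ENNReal.ofReal_mul (by positivity)]
      congr 2
      rw [← Real.rpow_natCast y (d - 1), Nat.cast_sub hd, Nat.cast_one]
    rw [step1, ← MeasureTheory.ofReal_integral_eq_lintegral_ofReal, carlson_onedim hd hβ hα hlam]
    · refine carlson_aux_integrable (by simpa using hd0) hα0 hc0.le hm ?_
      have h1 : (d:ℝ) < α / (β - 1) := (lt_div_iff₀ hβ1).mpr (by linarith)
      have h2 : α * (1/(β-1)) = α / (β-1) := by ring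
      linarith
    · filter_upwards [ae_restrict_mem measurableSet_Ioi] with y hy
      have hy0 : (0:ℝ) < y := hy
      positivity
  rw [inner, ← ENNReal.ofReal_mul (by positivity)]

lemma carlson_holder {d : ℕ} (g : EuclideanSpace ℝ (Fin d) → ℝ)
    (hg : Measurable g) (hg0 : ∀ x, 0 ≤ g x) {α β lam : ℝ} (hβ : 1 < β)
    (hα0 : 0 < α) (hlam : 0 < lam) :
    ∫⁻ x, ENNReal.ofReal (g x) ≤
      ((∫⁻ x, ENNReal.ofReal (g x ^ β)) +
        ENNReal.ofReal (lam ^ (-α)) * ∫⁻ x, ENNReal.ofReal (‖x‖ ^ α * g x ^ β)) ^ (1/β) *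
      (∫⁻ x : EuclideanSpace ℝ (Fin d), ENNReal.ofReal ((1 + lam ^ (-α) * ‖x‖ ^ α) ^ (-(1/(β-1))))) ^ ((β-1)/β) := by
  have hβ0 : (0:ℝ) < β := by linarith
  have hβ1 : (0:ℝ) < β - 1 := by linarith
  have hm : (0:ℝ) < lam ^ (-α) := Real.rpow_pos_of_pos hlam _
  set m : ℝ := lam ^ (-α) with hmdef
  set W : EuclideanSpace ℝ (Fin d) → ℝ≥0∞ :=
    fun (x : EuclideanSpace ℝ (Fin d)) => ENNReal.ofReal (1 + m * ‖x‖ ^ α) with hWdef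
  have hWbase : ∀ x : EuclideanSpace ℝ (Fin d), (0:ℝ) < 1 + m * ‖x‖ ^ α := by
    intro x
    have : (0:ℝ) ≤ ‖x‖ ^ α := Real.rpow_nonneg (norm_nonneg _) _
    nlinarith
  have hW0 : ∀ x, W x ≠ 0 := fun x => by
    simp only [hWdef, ne_eq, ENNReal.ofReal_eq_zero, not_le]; exact hWbase x
  have hWtop : ∀ x, W x ≠ ⊤ := fun x => ENNReal.ofReal_ne_top
  have hWmeas : Measurable W := by
    rw [hWdef]; fun_prop
  set f₁ : EuclideanSpace ℝ (Fin d) → ℝ≥0∞ :=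
    fun x => ENNReal.ofReal (g x) * (W x) ^ (1/β) with hf₁def
  set f₂ : EuclideanSpace ℝ (Fin d) → ℝ≥0∞ := fun x => (W x) ^ (-(1/β)) with hf₂def
  have hprod : ∀ x, f₁ x * f₂ x = ENNReal.ofReal (g x) := by
    intro x
    rw [hf₁def, hf₂def, mul_assoc, ← ENNReal.rpow_add _ _ (hW0 x) (hWtop x)]
    norm_num
  have hpq : Real.HolderConjugate β (β/(β-1)) := Real.HolderConjugate.conjExponent hβ
  have hf₁m : Measurable f₁ := by
    rw [hf₁def]; fun_prop
  have hf₂m : Measurable f₂ := by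
    rw [hf₂def]; fun_prop
  have holder := ENNReal.lintegral_mul_le_Lp_mul_Lq volume hpq hf₁m.aemeasurable
    hf₂m.aemeasurable
  have heq : ∫⁻ x, (f₁ * f₂) x = ∫⁻ x, ENNReal.ofReal (g x) := by
    apply lintegral_congr
    intro x
    exact hprod x
  have hI1 : ∫⁻ x, f₁ x ^ β =
      (∫⁻ x, ENNReal.ofReal (g x ^ β)) +
        ENNReal.ofReal m * ∫⁻ x, ENNReal.ofReal (‖x‖ ^ α * g x ^ β) := by
    have pointwise : ∀ x, f₁ x ^ β =
        ENNReal.ofReal (g x ^ β) + ENNReal.ofReal m * ENNReal.ofReal (‖x‖ ^ α * g x ^ β) := by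
      intro x
      have h1 : (0:ℝ) ≤ ‖x‖ ^ α := Real.rpow_nonneg (norm_nonneg _) _
      have h2 : (0:ℝ) ≤ g x ^ β := Real.rpow_nonneg (hg0 x) _
      have h3 : (0:ℝ) ≤ m := hm.le
      rw [hf₁def, ENNReal.mul_rpow_of_nonneg _ _ hβ0.le, ← ENNReal.rpow_mul,
        one_div_mul_cancel hβ0.ne', ENNReal.rpow_one,
        ENNReal.ofReal_rpow_of_nonneg (hg0 x) hβ0.le, hWdef,
        ← ENNReal.ofReal_mul h2, ← ENNReal.ofReal_mul h3,
        ← ENNReal.ofReal_add h2 (by positivity)]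
      congr 1
      ring
    simp_rw [pointwise]
    rw [lintegral_add_left (by fun_prop), lintegral_const_mul _ (by fun_prop)]
  have hI2 : ∫⁻ x, f₂ x ^ (β/(β-1)) =
      ∫⁻ x : EuclideanSpace ℝ (Fin d), ENNReal.ofReal ((1 + m * ‖x‖ ^ α) ^ (-(1/(β-1)))) := by
    apply lintegral_congr
    intro x
    rw [hf₂def, ← ENNReal.rpow_mul,
      show (-(1/β)) * (β/(β-1)) = -(1/(β-1)) by field_simp,
      hWdef, ← ENNReal.ofReal_rpow_of_pos (hWbase x)]
  rw [heq, hI1, hI2] at holder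
  have hq : 1 / (β/(β-1)) = (β-1)/β := by field_simp
  rw [hq] at holder
  exact holder

lemma carlson_algebra {dr α β a b c₀ : ℝ} (hd : 0 < dr) (hβ : 1 < β)
    (hα : dr * (β-1) < α) (ha : 0 < a) (hb : 0 < b) (hc₀ : 0 < c₀) :
    (a + ((((α - dr*(β-1)) * b / ((dr*(β-1)) * a)) ^ (1/α)) ^ (-α)) * b) ^ (1/β) *
      (((((α - dr*(β-1)) * b / ((dr*(β-1)) * a)) ^ (1/α)) ^ dr) * c₀) ^ ((β-1)/β)
    = ((α/(dr*(β-1))) ^ (1/β) * ((dr*(β-1))/(α - dr*(β-1))) ^ ((α - dr*(β-1))/(α*β)) *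
        c₀ ^ ((β-1)/β)) * a ^ ((α - dr*(β-1))/(α*β)) * b ^ ((dr*(β-1))/(α*β)) := by
  have hβ1 : (0:ℝ) < β - 1 := by linarith
  have hβ0 : (0:ℝ) < β := by linarith
  have hr : (0:ℝ) < dr * (β-1) := by positivity
  have hs : (0:ℝ) < α - dr * (β-1) := by linarith
  have hα0 : (0:ℝ) < α := by linarith
  have hX : (0:ℝ) < (α - dr*(β-1)) * b / ((dr*(β-1)) * a) := by positivity
  set X : ℝ := (α - dr*(β-1)) * b / ((dr*(β-1)) * a) with hXdef
  have h1 : (X ^ (1/α)) ^ (-α) = X⁻¹ := by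
    rw [← Real.rpow_mul hX.le, show (1/α) * (-α) = -1 by field_simp, Real.rpow_neg_one]
  have h2 : a + X⁻¹ * b = a * α / (α - dr*(β-1)) := by
    rw [hXdef]
    field_simp
    ring
  have h3 : (X ^ (1/α)) ^ dr = X ^ (dr/α) := by
    rw [← Real.rpow_mul hX.le]
    congr 1
    field_simp
  rw [h1, h2, h3,
    Real.mul_rpow (Real.rpow_nonneg hX.le _) hc₀.le, ← Real.rpow_mul hX.le]
  have hAq : (0:ℝ) < a * α / (α - dr*(β-1)) := by positivity
  have hq1 : (0:ℝ) < α / (dr*(β-1)) := by positivity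
  have hq2 : (0:ℝ) < (dr*(β-1)) / (α - dr*(β-1)) := by positivity
  rw [Real.rpow_def_of_pos hAq, Real.rpow_def_of_pos hX, Real.rpow_def_of_pos hq1,
    Real.rpow_def_of_pos hq2, Real.rpow_def_of_pos hc₀,
    Real.rpow_def_of_pos ha, Real.rpow_def_of_pos hb]
  simp only [← Real.exp_add]
  congr 1
  have e1 : Real.log (a * α / (α - dr*(β-1)))
      = Real.log a + Real.log α - Real.log (α - dr*(β-1)) := by
    rw [Real.log_div (by positivity) (by positivity), Real.log_mul ha.ne' hα0.ne']
  have e2 : Real.log X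
      = Real.log (α - dr*(β-1)) + Real.log b - (Real.log (dr*(β-1)) + Real.log a) := by
    rw [hXdef, Real.log_div (by positivity) (by positivity), Real.log_mul hs.ne' hb.ne',
      Real.log_mul hr.ne' ha.ne']
  have e3 : Real.log (α / (dr*(β-1))) = Real.log α - Real.log (dr*(β-1)) :=
    Real.log_div hα0.ne' hr.ne'
  have e4 : Real.log ((dr*(β-1))/(α - dr*(β-1)))
      = Real.log (dr*(β-1)) - Real.log (α - dr*(β-1)) :=
    Real.log_div hr.ne' hs.ne'
  rw [e1, e2, e3, e4]
  field_simp
  ring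

theorem stmt2 {d : ℕ} (hd : 1 ≤ d) (g : EuclideanSpace ℝ (Fin d) → ℝ)
    (hg : Measurable g) (hg0 : ∀ x, 0 ≤ g x) (α β : ℝ) (hβ : 1 < β)
    (hα : (d : ℝ) * (β - 1) < α) :
    ∫⁻ x, ENNReal.ofReal (g x) ≤
      ENNReal.ofReal
        ((α / (d * (β - 1))) ^ (1 / β) *
          (d * (β - 1) / (α - d * (β - 1))) ^ ((α - d * (β - 1)) / (α * β)) *
          ((2 * Real.pi ^ ((d : ℝ) / 2) / Real.Gamma (d / 2)) * (1 / α) *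
            ∫ s in Set.Ioi (0 : ℝ), s ^ ((d : ℝ) / α - 1) / (1 + s) ^ (1 / (β - 1))) ^
            ((β - 1) / β)) *
      (∫⁻ x, ENNReal.ofReal (g x ^ β)) ^ ((α - d * (β - 1)) / (α * β)) *
      (∫⁻ x, ENNReal.ofReal (‖x‖ ^ α * g x ^ β)) ^ (d * (β - 1) / (α * β)) := by
  have hβ1 : (0:ℝ) < β - 1 := by linarith
  have hβ0 : (0:ℝ) < β := by linarith
  have hd0 : (0:ℝ) < (d:ℝ) := by exact_mod_cast hd
  have hr : (0:ℝ) < (d:ℝ) * (β - 1) := by positivity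
  have hs : (0:ℝ) < α - (d:ℝ) * (β - 1) := by linarith
  have hα0 : (0:ℝ) < α := by linarith
  have hps : (0:ℝ) < (α - (d:ℝ) * (β - 1)) / (α * β) := by positivity
  have hpr : (0:ℝ) < (d:ℝ) * (β - 1) / (α * β) := by positivity
  set I : ℝ := ∫ s in Set.Ioi (0 : ℝ), s ^ ((d : ℝ) / α - 1) / (1 + s) ^ (1 / (β - 1))
    with hIdef
  set κ : ℝ := 2 * Real.pi ^ ((d : ℝ) / 2) / Real.Gamma (d / 2) with hκdef
  have hκ : 0 < κ := by
    rw [hκdef]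
    have h1 : (0:ℝ) < Real.pi ^ ((d:ℝ)/2) := Real.rpow_pos_of_pos Real.pi_pos _
    have h2 : (0:ℝ) < Real.Gamma ((d:ℝ)/2) := Real.Gamma_pos_of_pos (by positivity)
    positivity
  -- positivity of I
  have hIint : IntegrableOn
      (fun s : ℝ => s ^ ((d : ℝ) / α - 1) / (1 + s) ^ (1 / (β - 1))) (Ioi (0:ℝ)) := by
    have h1 : IntegrableOn
        (fun s : ℝ => s ^ ((d : ℝ) / α - 1) * (1 + 1 * s ^ (1:ℝ)) ^ (-(1/(β-1))))
        (Ioi (0:ℝ)) := by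
      refine carlson_aux_integrable (by
        have := div_pos hd0 hα0
        linarith) one_pos (by positivity) one_pos ?_
      have h2 : (d:ℝ) / α < 1 / (β-1) := by
        rw [div_lt_div_iff₀ hα0 hβ1]
        linarith
      linarith
    refine h1.congr_fun (fun s hs' => ?_) measurableSet_Ioi
    have hs0 : (0:ℝ) < s := hs'
    beta_reduce
    rw [Real.rpow_one, one_mul, Real.rpow_neg (by linarith)]
    exact (div_eq_mul_inv _ _).symm
  have hI : 0 < I := by
    rw [hIdef]
    rw [setIntegral_pos_iff_support_of_nonneg_ae _ hIint]
    · have hsub : Ioi (0:ℝ) ⊆ Function.support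
          (fun s : ℝ => s ^ ((d : ℝ) / α - 1) / (1 + s) ^ (1 / (β - 1))) ∩ Ioi 0 := by
        intro s hs'
        have hs0 : (0:ℝ) < s := hs'
        refine ⟨?_, hs'⟩
        have h1 : (0:ℝ) < s ^ ((d : ℝ) / α - 1) := Real.rpow_pos_of_pos hs0 _
        have h2 : (0:ℝ) < (1 + s) ^ (1 / (β - 1)) := Real.rpow_pos_of_pos (by linarith) _
        exact (div_pos h1 h2).ne'
      calc (0:ℝ≥0∞) < volume (Ioi (0:ℝ)) := by simp [Real.volume_Ioi]
        _ ≤ _ := measure_mono hsub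
    · filter_upwards [ae_restrict_mem measurableSet_Ioi] with s hs'
      have hs0 : (0:ℝ) < s := hs'
      positivity
  set C : ℝ := (α / (d * (β - 1))) ^ (1 / β) *
      (d * (β - 1) / (α - d * (β - 1))) ^ ((α - d * (β - 1)) / (α * β)) *
      (κ * (1 / α) * I) ^ ((β - 1) / β) with hCdef
  have hc₀ : (0:ℝ) < κ * (1/α) * I := by positivity
  have hC : 0 < C := by
    rw [hCdef]
    have h1 : (0:ℝ) < α / ((d:ℝ) * (β - 1)) := by positivity
    have h2 : (0:ℝ) < (d:ℝ) * (β - 1) / (α - (d:ℝ) * (β - 1)) := by positivity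
    positivity
  set A : ℝ≥0∞ := ∫⁻ x, ENNReal.ofReal (g x ^ β) with hAdef
  set B : ℝ≥0∞ := ∫⁻ x : EuclideanSpace ℝ (Fin d), ENNReal.ofReal (‖x‖ ^ α * g x ^ β)
    with hBdef
  have hgm : Measurable (fun x => ENNReal.ofReal (g x)) := by fun_prop
  have hgβm : Measurable (fun x => ENNReal.ofReal (g x ^ β)) := by fun_prop
  have hBm : Measurable
      (fun x : EuclideanSpace ℝ (Fin d) => ENNReal.ofReal (‖x‖ ^ α * g x ^ β)) := by fun_prop
  -- degenerate zero cases
  by_cases hA0 : A = 0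
  · have h1 : (fun x => ENNReal.ofReal (g x ^ β)) =ᵐ[volume] 0 :=
      (lintegral_eq_zero_iff hgβm).mp hA0
    have h2 : ∫⁻ x, ENNReal.ofReal (g x) = 0 := by
      rw [lintegral_eq_zero_iff hgm]
      filter_upwards [h1] with x hx
      simp only [Pi.zero_apply, ENNReal.ofReal_eq_zero] at hx ⊢
      by_contra hgx
      push_neg at hgx
      nlinarith [Real.rpow_pos_of_pos hgx β]
    rw [h2]
    exact zero_le
  by_cases hB0 : B = 0
  · have h1 : (fun x : EuclideanSpace ℝ (Fin d) => ENNReal.ofReal (‖x‖ ^ α * g x ^ β))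
        =ᵐ[volume] 0 := (lintegral_eq_zero_iff hBm).mp hB0
    have hne : ∀ᵐ x : EuclideanSpace ℝ (Fin d) ∂volume, x ≠ 0 := by
      haveI : Nonempty (Fin d) := ⟨⟨0, hd⟩⟩
      refine ae_iff.mpr ?_
      simp
    have h2 : ∫⁻ x, ENNReal.ofReal (g x) = 0 := by
      rw [lintegral_eq_zero_iff hgm]
      filter_upwards [h1, hne] with x hx hx0
      simp only [Pi.zero_apply, ENNReal.ofReal_eq_zero] at hx ⊢
      have hnx : (0:ℝ) < ‖x‖ ^ α := Real.rpow_pos_of_pos (norm_pos_iff.mpr hx0) _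
      by_contra hgx
      push_neg at hgx
      nlinarith [Real.rpow_pos_of_pos hgx β]
    rw [h2]
    exact zero_le
  -- degenerate top cases
  by_cases hAt : A = ⊤
  · refine le_top.trans (le_of_eq ?_)
    rw [hAt, ENNReal.top_rpow_of_pos hps]
    rw [ENNReal.mul_top (by simp [ENNReal.ofReal_eq_zero, not_le, hC]), ENNReal.top_mul]
    simp only [ne_eq, ENNReal.rpow_eq_zero_iff, not_or, not_and, not_lt]
    constructor
    · intro h; exact absurd h hB0
    · intro h; linarith [hpr]
  by_cases hBt : B = ⊤
  · refine le_top.trans (le_of_eq ?_)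
    rw [hBt, ENNReal.top_rpow_of_pos hpr, ENNReal.mul_top]
    simp only [ne_eq, mul_eq_zero, not_or, ENNReal.rpow_eq_zero_iff, not_and, not_lt,
      ENNReal.ofReal_eq_zero, not_le]
    refine ⟨hC, ?_, ?_⟩
    · intro h; exact absurd h hA0
    · intro h; linarith [hps]
  -- main case
  set a : ℝ := A.toReal with hadef
  set b : ℝ := B.toReal with hbdef
  have ha : 0 < a := ENNReal.toReal_pos hA0 hAt
  have hb : 0 < b := ENNReal.toReal_pos hB0 hBt
  set lam : ℝ := ((α - (d:ℝ)*(β-1)) * b / (((d:ℝ)*(β-1)) * a)) ^ (1/α) with hlamdef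
  have hX : (0:ℝ) < (α - (d:ℝ)*(β-1)) * b / (((d:ℝ)*(β-1)) * a) := by positivity
  have hlam : 0 < lam := Real.rpow_pos_of_pos hX _
  have holder := carlson_holder g hg hg0 hβ hα0 hlam
  rw [carlson_weight hd hβ hα hlam, ← hκdef, ← hIdef] at holder
  have hAe : A = ENNReal.ofReal a := (ENNReal.ofReal_toReal hAt).symm
  have hBe : B = ENNReal.ofReal b := (ENNReal.ofReal_toReal hBt).symm
  have hlamα : (0:ℝ) < lam ^ (-α) := Real.rpow_pos_of_pos hlam _
  have key : ((A : ℝ≥0∞) + ENNReal.ofReal (lam ^ (-α)) * B) ^ (1/β) *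
      (ENNReal.ofReal (κ * (lam ^ (d:ℝ) * ((1/α) * I)))) ^ ((β-1)/β)
      = ENNReal.ofReal C * A ^ ((α - (d:ℝ) * (β - 1)) / (α * β)) *
        B ^ ((d:ℝ) * (β - 1) / (α * β)) := by
    have hsum : (0:ℝ) < a + lam ^ (-α) * b := add_pos ha (mul_pos hlamα hb)
    have hc₀'' : (0:ℝ) < κ * (lam ^ (d:ℝ) * ((1/α) * I)) := by positivity
    rw [hAe, hBe, ← ENNReal.ofReal_mul hlamα.le, ← ENNReal.ofReal_add ha.le
        (mul_nonneg hlamα.le hb.le),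
      ENNReal.ofReal_rpow_of_pos hsum, ENNReal.ofReal_rpow_of_pos hc₀'',
      ENNReal.ofReal_rpow_of_pos ha, ENNReal.ofReal_rpow_of_pos hb,
      ← ENNReal.ofReal_mul (by positivity), ← ENNReal.ofReal_mul (by positivity),
      ← ENNReal.ofReal_mul (by positivity)]
    congr 1
    rw [show κ * (lam ^ (d:ℝ) * ((1/α) * I)) = lam ^ (d:ℝ) * (κ * (1/α) * I) by ring,
      hlamdef, hCdef]
    exact carlson_algebra hd0 hβ hα ha hb hc₀
  rw [← hAdef, ← hBdef] at holder
  exact holder.trans (le_of_eq key)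
end

section
/- Let μ, ν be probability measures on ℝ^d with densities f and g with respect to Lebesgue measure and finite p-th moments, p ≥ 1. Then W_p(μ, ν)^p ≤ 2^{p−1} ∫_{ℝ^d} |x|^p |f(x) − g(x)| dx. -/
open MeasureTheory ProbabilityTheory Real Filter Set
open scoped ENNReal NNReal

lemma key_ineq {E : Type*} [NormedAddCommGroup E] {p : ℝ} (hp : 1 ≤ p) (x y : E) :
    ENNReal.ofReal (‖x - y‖ ^ p) ≤
      2 ^ (p - 1) * (ENNReal.ofReal (‖x‖ ^ p) + ENNReal.ofReal (‖y‖ ^ p)) := by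
  have h0 : (0:ℝ) ≤ p := by linarith
  rw [← ENNReal.ofReal_rpow_of_nonneg (norm_nonneg _) h0,
    ← ENNReal.ofReal_rpow_of_nonneg (norm_nonneg _) h0,
    ← ENNReal.ofReal_rpow_of_nonneg (norm_nonneg _) h0]
  calc ENNReal.ofReal ‖x - y‖ ^ p
      ≤ (ENNReal.ofReal ‖x‖ + ENNReal.ofReal ‖y‖) ^ p := by
        apply ENNReal.rpow_le_rpow _ h0
        rw [← ENNReal.ofReal_add (norm_nonneg _) (norm_nonneg _)]
        exact ENNReal.ofReal_le_ofReal (norm_sub_le _ _)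
    _ ≤ 2 ^ (p - 1) * (ENNReal.ofReal ‖x‖ ^ p + ENNReal.ofReal ‖y‖ ^ p) :=
        ENNReal.rpow_add_le_mul_rpow_add_rpow _ _ hp

theorem stmt5 {d : ℕ} (hd : 1 ≤ d) (p : ℝ) (hp : 1 ≤ p)
    (f g : EuclideanSpace ℝ (Fin d) → ℝ) (hf : Measurable f) (hg : Measurable g)
    (hf0 : ∀ x, 0 ≤ f x) (hg0 : ∀ x, 0 ≤ g x)
    (μ ν : Measure (EuclideanSpace ℝ (Fin d)))
    (hμ : μ = volume.withDensity (fun x => ENNReal.ofReal (f x)))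
    (hν : ν = volume.withDensity (fun x => ENNReal.ofReal (g x)))
    [IsProbabilityMeasure μ] [IsProbabilityMeasure ν]
    (hμp : ∫⁻ x, ENNReal.ofReal (‖x‖ ^ p) ∂μ < ⊤)
    (hνp : ∫⁻ x, ENNReal.ofReal (‖x‖ ^ p) ∂ν < ⊤) :
    (Wp p μ ν) ^ p ≤ 2 ^ (p - 1) * ∫ x, ‖x‖ ^ p * |f x - g x| := by
  have hp0 : (0:ℝ) < p := lt_of_lt_of_le one_pos hp
  -- the coupling set
  set S := {c : ℝ | ∃ cpl : Measure (EuclideanSpace ℝ (Fin d) × EuclideanSpace ℝ (Fin d)),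
    IsProbabilityMeasure cpl ∧ cpl.map Prod.fst = μ ∧ cpl.map Prod.snd = ν ∧
    c = ∫ z, ‖z.1 - z.2‖ ^ p ∂cpl} with hS
  have hSnonneg : ∀ c ∈ S, 0 ≤ c := by
    rintro c ⟨cpl, _, _, _, rfl⟩
    exact integral_nonneg fun z => Real.rpow_nonneg (norm_nonneg _) p
  have hSbdd : BddBelow S := ⟨0, hSnonneg⟩
  have hW0 : 0 ≤ WpPow p μ ν := Real.sInf_nonneg hSnonneg
  have hWeq : Wp p μ ν ^ p = WpPow p μ ν := by
    rw [Wp, ← Real.rpow_mul hW0, one_div_mul_cancel hp0.ne', Real.rpow_one]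
  have hRHS0 : 0 ≤ 2 ^ (p - 1) * ∫ x, ‖x‖ ^ p * |f x - g x| := by
    apply mul_nonneg (Real.rpow_nonneg (by norm_num) _)
    exact integral_nonneg fun x => mul_nonneg (Real.rpow_nonneg (norm_nonneg _) p) (abs_nonneg _)
  rw [hWeq]
  have hWle : WpPow p μ ν ≤ sInf S := le_of_eq rfl
  -- measurability of the cost function
  have hφ : Measurable fun z : EuclideanSpace ℝ (Fin d) × EuclideanSpace ℝ (Fin d) =>
      ‖z.1 - z.2‖ ^ p :=
    (Real.continuous_rpow_const hp0.le).measurable.comp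
      ((measurable_fst.sub measurable_snd).norm)
  have hdiag : Measurable fun x : EuclideanSpace ℝ (Fin d) => (x, x) :=
    measurable_id.prodMk measurable_id
  -- densities
  set m : EuclideanSpace ℝ (Fin d) → ℝ := fun x => min (f x) (g x) with hm_def
  have hm : Measurable m := hf.min hg
  have hm0 : ∀ x, 0 ≤ m x := fun x => le_min (hf0 x) (hg0 x)
  have hf₁ : Measurable fun x => f x - m x := hf.sub hm
  have hg₁ : Measurable fun x => g x - m x := hg.sub hm
  set σ : Measure (EuclideanSpace ℝ (Fin d)) :=
    volume.withDensity (fun x => ENNReal.ofReal (m x)) with hσ_def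
  set μ₁ : Measure (EuclideanSpace ℝ (Fin d)) :=
    volume.withDensity (fun x => ENNReal.ofReal (f x - m x)) with hμ₁_def
  set ν₁ : Measure (EuclideanSpace ℝ (Fin d)) :=
    volume.withDensity (fun x => ENNReal.ofReal (g x - m x)) with hν₁_def
  have hμσ : μ = σ + μ₁ := by
    rw [hμ, hσ_def, hμ₁_def, ← withDensity_add_left hm.ennreal_ofReal]
    congr 1
    ext x
    rw [Pi.add_apply, ← ENNReal.ofReal_add (hm0 x) (sub_nonneg.2 (min_le_left _ _))]
    congr 1; ring
  have hνσ : ν = σ + ν₁ := by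
    rw [hν, hσ_def, hν₁_def, ← withDensity_add_left hm.ennreal_ofReal]
    congr 1
    ext x
    rw [Pi.add_apply, ← ENNReal.ofReal_add (hm0 x) (sub_nonneg.2 (min_le_right _ _))]
    congr 1; ring
  have hμuniv : σ Set.univ + μ₁ Set.univ = 1 := by
    have := measure_univ (μ := μ); rw [hμσ] at this; simpa using this
  have hνuniv : σ Set.univ + ν₁ Set.univ = 1 := by
    have := measure_univ (μ := ν); rw [hνσ] at this; simpa using this
  set r : ℝ≥0∞ := μ₁ Set.univ with hr_def
  have hr1 : r ≤ 1 := le_of_add_le_right hμuniv.le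
  have hrtop : r ≠ ⊤ := (hr1.trans_lt ENNReal.one_lt_top).ne
  have hσtop : σ Set.univ ≠ ⊤ := by
    intro hc; rw [hc] at hμuniv; simp at hμuniv
  have hνr : ν₁ Set.univ = r := by
    have h2 : σ Set.univ + ν₁ Set.univ = σ Set.univ + μ₁ Set.univ := by
      rw [hμuniv, hνuniv]
    exact (ENNReal.add_right_inj hσtop).mp h2
  haveI : IsFiniteMeasure μ₁ := ⟨hr1.trans_lt ENNReal.one_lt_top⟩
  haveI : IsFiniteMeasure ν₁ := ⟨by rw [hνr]; exact hr1.trans_lt ENNReal.one_lt_top⟩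
  by_cases hr0 : r = 0
  · -- identical measures
    have hμ₁0 : μ₁ = 0 := Measure.measure_univ_eq_zero.mp hr0
    have hν₁0 : ν₁ = 0 := Measure.measure_univ_eq_zero.mp (by rw [hνr]; exact hr0)
    have hμν : ν = μ := by rw [hμσ, hνσ, hμ₁0, hν₁0]
    set pl := μ.map (fun x => (x, x)) with hpl_def
    haveI : IsProbabilityMeasure pl := Measure.isProbabilityMeasure_map hdiag.aemeasurable
    have hfst : pl.map Prod.fst = μ := by
      rw [hpl_def, Measure.map_map measurable_fst hdiag]
      simp [Function.comp_def]
    have hzero : (0:ℝ) ∈ S := by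
      have hsnd0 : pl.map Prod.snd = μ := by
        rw [hpl_def, Measure.map_map measurable_snd hdiag]
        simp [Function.comp_def]
      refine ⟨pl, inferInstance, hfst, by rw [hμν]; exact hsnd0, ?_⟩
      rw [hpl_def, integral_map hdiag.aemeasurable hφ.aestronglyMeasurable]
      simp [Real.zero_rpow hp0.ne']
    exact le_trans (csInf_le hSbdd hzero) hRHS0
  · -- main case
    set pl := σ.map (fun x => (x, x)) + r⁻¹ • (μ₁.prod ν₁) with hpl_def
    have hpluniv : pl Set.univ = 1 := by
      rw [hpl_def]
      simp only [Measure.add_apply, Measure.smul_apply, smul_eq_mul]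
      rw [Measure.map_apply hdiag MeasurableSet.univ]
      have hprod : (μ₁.prod ν₁) Set.univ = r * r := by
        rw [← Set.univ_prod_univ, Measure.prod_prod, hνr]
      rw [hprod, Set.preimage_univ, ← mul_assoc, ENNReal.inv_mul_cancel hr0 hrtop, one_mul]
      exact hμuniv
    haveI hplprob : IsProbabilityMeasure pl := ⟨hpluniv⟩
    have hfst : pl.map Prod.fst = μ := by
      rw [hpl_def, Measure.map_add _ _ measurable_fst, Measure.map_smul,
        Measure.map_map measurable_fst hdiag, Measure.map_fst_prod, hνr]
      simp only [Function.comp_def]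
      rw [Measure.map_id', smul_smul, ENNReal.inv_mul_cancel hr0 hrtop, one_smul, hμσ]
    have hsnd : pl.map Prod.snd = ν := by
      rw [hpl_def, Measure.map_add _ _ measurable_snd, Measure.map_smul,
        Measure.map_map measurable_snd hdiag, Measure.map_snd_prod]
      simp only [Function.comp_def]
      rw [Measure.map_id', smul_smul, ENNReal.inv_mul_cancel hr0 hrtop, one_smul, hνσ]
    -- cost bound
    set Φ : EuclideanSpace ℝ (Fin d) × EuclideanSpace ℝ (Fin d) → ℝ≥0∞ :=
      fun z => ENNReal.ofReal (‖z.1 - z.2‖ ^ p) with hΦ_def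
    have hΦm : Measurable Φ := hφ.ennreal_ofReal
    set a : EuclideanSpace ℝ (Fin d) → ℝ≥0∞ := fun x => ENNReal.ofReal (‖x‖ ^ p) with ha_def
    have ham : Measurable a :=
      ((Real.continuous_rpow_const hp0.le).measurable.comp measurable_norm).ennreal_ofReal
    set A : ℝ≥0∞ := ∫⁻ x, a x ∂μ₁ with hA_def
    set B : ℝ≥0∞ := ∫⁻ x, a x ∂ν₁ with hB_def
    have hμ₁le : μ₁ ≤ μ := by rw [hμσ]; exact Measure.le_add_left le_rfl
    have hν₁le : ν₁ ≤ ν := by rw [hνσ]; exact Measure.le_add_left le_rfl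
    have hAtop : A ≠ ⊤ := (lt_of_le_of_lt (lintegral_mono' hμ₁le le_rfl) hμp).ne
    have hBtop : B ≠ ⊤ := (lt_of_le_of_lt (lintegral_mono' hν₁le le_rfl) hνp).ne
    -- lintegral over pl
    have hL : ∫⁻ z, Φ z ∂pl = r⁻¹ * ∫⁻ z, Φ z ∂(μ₁.prod ν₁) := by
      rw [hpl_def, lintegral_add_measure, lintegral_smul_measure,
        lintegral_map hΦm hdiag]
      simp [hΦ_def, Real.zero_rpow hp0.ne']
    have hfstint : ∫⁻ z, a z.1 ∂(μ₁.prod ν₁) = r * A := by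
      rw [← lintegral_map ham measurable_fst, Measure.map_fst_prod, hνr,
        lintegral_smul_measure, smul_eq_mul]
    have hsndint : ∫⁻ z, a z.2 ∂(μ₁.prod ν₁) = r * B := by
      rw [← lintegral_map ham measurable_snd, Measure.map_snd_prod,
        lintegral_smul_measure, smul_eq_mul]
    have hprodle : ∫⁻ z, Φ z ∂(μ₁.prod ν₁) ≤ 2 ^ (p - 1) * (r * A + r * B) := by
      calc ∫⁻ z, Φ z ∂(μ₁.prod ν₁)
          ≤ ∫⁻ z, 2 ^ (p - 1) * (a z.1 + a z.2) ∂(μ₁.prod ν₁) :=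
            lintegral_mono fun z => key_ineq hp z.1 z.2
        _ = 2 ^ (p - 1) * (∫⁻ z, a z.1 + a z.2 ∂(μ₁.prod ν₁)) :=
            lintegral_const_mul _ ((ham.comp measurable_fst).add (ham.comp measurable_snd))
        _ = 2 ^ (p - 1) * (r * A + r * B) := by
            rw [lintegral_add_left (f := fun z : EuclideanSpace ℝ (Fin d) × EuclideanSpace ℝ (Fin d) => a z.1) (ham.comp measurable_fst),
              hfstint, hsndint]
    have hLle : ∫⁻ z, Φ z ∂pl ≤ 2 ^ (p - 1) * (A + B) := by
      rw [hL]
      calc r⁻¹ * ∫⁻ z, Φ z ∂(μ₁.prod ν₁) ≤ r⁻¹ * (2 ^ (p - 1) * (r * A + r * B)) :=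
            mul_le_mul_right hprodle _
        _ = 2 ^ (p - 1) * ((r⁻¹ * r) * (A + B)) := by ring
        _ = 2 ^ (p - 1) * (A + B) := by
            rw [ENNReal.inv_mul_cancel hr0 hrtop, one_mul]
    -- identification of A + B
    set I : ℝ≥0∞ := ∫⁻ x, ENNReal.ofReal (‖x‖ ^ p * |f x - g x|) ∂volume with hI_def
    have hA' : A = ∫⁻ x, ENNReal.ofReal (f x - m x) * a x ∂volume := by
      rw [hA_def, hμ₁_def, lintegral_withDensity_eq_lintegral_mul _ hf₁.ennreal_ofReal ham]
      rfl
    have hB' : B = ∫⁻ x, ENNReal.ofReal (g x - m x) * a x ∂volume := by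
      rw [hB_def, hν₁_def, lintegral_withDensity_eq_lintegral_mul _ hg₁.ennreal_ofReal ham]
      rfl
    have hABI : A + B = I := by
      rw [hA', hB', ← lintegral_add_left (f := fun x => ENNReal.ofReal (f x - m x) * a x) (hf₁.ennreal_ofReal.mul ham)]
      apply lintegral_congr
      intro x
      have habs : f x - m x + (g x - m x) = |f x - g x| := by
        rcases le_total (f x) (g x) with hle | hle
        · rw [abs_of_nonpos (by linarith)]
          simp only [hm_def, min_eq_left hle]
          ring
        · rw [abs_of_nonneg (by linarith)]
          simp only [hm_def, min_eq_right hle]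
          ring
      rw [← add_mul, ← ENNReal.ofReal_add (sub_nonneg.2 (min_le_left _ _))
          (sub_nonneg.2 (min_le_right _ _)), habs,
        ENNReal.ofReal_mul (Real.rpow_nonneg (norm_nonneg _) p), mul_comm]
    have hItop : I ≠ ⊤ := by
      rw [← hABI]
      exact ENNReal.add_ne_top.mpr ⟨hAtop, hBtop⟩
    -- the real integrals
    have hC : (∫ z, ‖z.1 - z.2‖ ^ p ∂pl) = (∫⁻ z, Φ z ∂pl).toReal := by
      rw [integral_eq_lintegral_of_nonneg_ae
        (Eventually.of_forall fun z => Real.rpow_nonneg (norm_nonneg _) p)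
        hφ.aestronglyMeasurable]
    have hRHS : (∫ x, ‖x‖ ^ p * |f x - g x|) = I.toReal := by
      rw [hI_def, integral_eq_lintegral_of_nonneg_ae (f := fun x => ‖x‖ ^ p * |f x - g x|)
        (Eventually.of_forall fun x =>
          mul_nonneg (Real.rpow_nonneg (norm_nonneg _) p) (abs_nonneg _))
        (((Real.continuous_rpow_const hp0.le).measurable.comp
          measurable_norm).mul ((hf.sub hg).abs)).aestronglyMeasurable]
    have hmem : (∫ z, ‖z.1 - z.2‖ ^ p ∂pl) ∈ S := ⟨pl, hplprob, hfst, hsnd, rfl⟩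
    have h2top : (2:ℝ≥0∞) ^ (p - 1) ≠ ⊤ :=
      ENNReal.rpow_ne_top_of_nonneg (by linarith) ENNReal.ofNat_ne_top
    calc WpPow p μ ν ≤ ∫ z, ‖z.1 - z.2‖ ^ p ∂pl := csInf_le hSbdd hmem
      _ = (∫⁻ z, Φ z ∂pl).toReal := hC
      _ ≤ ((2:ℝ≥0∞) ^ (p - 1) * I).toReal := by
          apply ENNReal.toReal_mono (ENNReal.mul_ne_top h2top hItop)
          rw [← hABI]; exact hLle
      _ = 2 ^ (p - 1) * I.toReal := by
          rw [ENNReal.toReal_mul, ← ENNReal.toReal_rpow]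
          norm_num
      _ = 2 ^ (p - 1) * ∫ x, ‖x‖ ^ p * |f x - g x| := by rw [hRHS]
end

section
/- There exist constants v₀ > 0 and c₀ > 0 such that for every n ∈ ℕ and every p ∈ (0,1) with np(1−p) ≥ v₀, if X ∼ Binomial(n, p), then P(X − np ≥ (1/2)√(np(1−p))) ≥ c₀. -/
set_option maxHeartbeats 1000000

open MeasureTheory ProbabilityTheory Real
open Finset


lemma desc_choose (n j i : ℕ) (h : j + i ≤ n) :
    ((j + i).descFactorial j : ℝ) * (n.choose (j + i) : ℝ)
      = (n.descFactorial j : ℝ) * ((n - j).choose i : ℝ) := by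
  have hjn : j ≤ n := le_trans (Nat.le_add_right _ _) h
  have hin : i ≤ n - j := by omega
  have hf : ∀ m : ℕ, (Nat.factorial m : ℝ) ≠ 0 :=
    fun m => Nat.cast_ne_zero.2 (Nat.factorial_ne_zero m)
  have e1 : (Nat.factorial i : ℝ) * ((j + i).descFactorial j : ℝ)
      = (Nat.factorial (j + i) : ℝ) := by
    have := Nat.factorial_mul_descFactorial (Nat.le_add_right j i)
    have h2 : j + i - j = i := by omega
    rw [h2] at this
    exact_mod_cast congrArg (Nat.cast (R := ℝ)) this
  have e2 : (Nat.factorial (n - j) : ℝ) * (n.descFactorial j : ℝ)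
      = (Nat.factorial n : ℝ) := by
    exact_mod_cast congrArg (Nat.cast (R := ℝ)) (Nat.factorial_mul_descFactorial hjn)
  have d1 : ((j + i).descFactorial j : ℝ)
      = (Nat.factorial (j + i) : ℝ) / (Nat.factorial i : ℝ) := by
    rw [eq_div_iff (hf i)]; linarith [e1]
  have d2 : (n.descFactorial j : ℝ)
      = (Nat.factorial n : ℝ) / (Nat.factorial (n - j) : ℝ) := by
    rw [eq_div_iff (hf (n - j))]; linarith [e2]
  have c1 : ((n.choose (j + i)) : ℝ)
      = (Nat.factorial n : ℝ)
        / ((Nat.factorial (j + i) : ℝ) * (Nat.factorial (n - (j + i)) : ℝ)) := by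
    rw [Nat.cast_choose ℝ h]
  have c2 : (((n - j).choose i) : ℝ)
      = (Nat.factorial (n - j) : ℝ)
        / ((Nat.factorial i : ℝ) * (Nat.factorial ((n - j) - i) : ℝ)) := by
    rw [Nat.cast_choose ℝ hin]
  have h3 : n - j - i = n - (j + i) := by omega
  rw [d1, d2, c1, c2, h3]
  field_simp

lemma sum_desc (n j : ℕ) (p q : ℝ) (hpq : p + q = 1) :
    ∑ k ∈ range (n + 1), (n.choose k : ℝ) * p ^ k * q ^ (n - k) * (k.descFactorial j : ℝ)
      = (n.descFactorial j : ℝ) * p ^ j := by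
  by_cases h : j ≤ n
  · have hsub : Ico j (n + 1) ⊆ range (n + 1) := by
      rw [range_eq_Ico]; exact Ico_subset_Ico (Nat.zero_le _) le_rfl
    have hzero : ∀ k ∈ range (n + 1), k ∉ Ico j (n + 1) →
        (n.choose k : ℝ) * p ^ k * q ^ (n - k) * (k.descFactorial j : ℝ) = 0 := by
      intro k hk hk'
      have hkj : k < j := by
        simp only [mem_range] at hk
        simp only [mem_Ico] at hk'
        omega
      rw [Nat.descFactorial_eq_zero_iff_lt.2 hkj]
      simp
    rw [← Finset.sum_subset hsub hzero, Finset.sum_Ico_eq_sum_range]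
    have hnj : n + 1 - j = (n - j) + 1 := by omega
    rw [hnj]
    have step : ∀ i ∈ range ((n - j) + 1),
        (n.choose (j + i) : ℝ) * p ^ (j + i) * q ^ (n - (j + i)) * ((j + i).descFactorial j : ℝ)
          = ((n.descFactorial j : ℝ) * p ^ j) *
            (p ^ i * q ^ ((n - j) - i) * ((n - j).choose i : ℝ)) := by
      intro i hi
      simp only [mem_range] at hi
      have hji : j + i ≤ n := by omega
      have h3 : n - (j + i) = (n - j) - i := by omega
      rw [pow_add, h3]
      have := desc_choose n j i hji
      linear_combination (p ^ j * p ^ i * q ^ ((n - j) - i)) * this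
    rw [Finset.sum_congr rfl step, ← Finset.mul_sum, ← add_pow p q (n - j), hpq, one_pow,
      mul_one]
  · have hn : ∀ k ∈ range (n + 1),
        (n.choose k : ℝ) * p ^ k * q ^ (n - k) * (k.descFactorial j : ℝ) = 0 := by
      intro k hk
      simp only [mem_range] at hk
      rw [Nat.descFactorial_eq_zero_iff_lt.2 (by omega)]
      simp
    rw [Finset.sum_congr rfl hn, Finset.sum_const, smul_zero,
      Nat.descFactorial_eq_zero_iff_lt.2 (by omega)]
    simp

example (k : ℕ) : (k.descFactorial 1 : ℝ) = k := by rw [Nat.descFactorial_one]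
example (k : ℕ) : (k.descFactorial 0 : ℝ) = 1 := by simp

lemma df2 (k : ℕ) : (k.descFactorial 2 : ℝ) = k * (k - 1) := Nat.cast_descFactorial_two ℝ k

lemma df3 (k : ℕ) : (k.descFactorial 3 : ℝ) = k * ((k : ℝ) - 1) * ((k : ℝ) - 2) := by
  match k with
  | 0 => norm_num
  | 1 => norm_num [Nat.descFactorial]
  | (m + 2) =>
    simp only [Nat.descFactorial_succ, Nat.descFactorial_zero, mul_one]
    have h1 : m + 2 - 1 = m + 1 := by omega
    have h2 : m + 2 - 2 = m := by omega
    rw [h1, h2]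
    push_cast
    ring

lemma df4 (k : ℕ) :
    (k.descFactorial 4 : ℝ) = k * ((k : ℝ) - 1) * ((k : ℝ) - 2) * ((k : ℝ) - 3) := by
  match k with
  | 0 => norm_num
  | 1 => norm_num [Nat.descFactorial]
  | 2 => norm_num [Nat.descFactorial]
  | (m + 3) =>
    simp only [Nat.descFactorial_succ, Nat.descFactorial_zero, mul_one]
    have h1 : m + 3 - 1 = m + 2 := by omega
    have h2 : m + 3 - 2 = m + 1 := by omega
    have h3 : m + 3 - 3 = m := by omega
    rw [h1, h2, h3]
    push_cast
    ring

lemma abs_lemma (N : ℕ) (W : ℕ → ℝ) (hW : ∀ k, 0 ≤ W k) (c σ : ℝ)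
    (hσ2 : 2 ≤ σ)
    (E0 : ∑ k ∈ range N, W k = 1)
    (M1 : ∑ k ∈ range N, W k * ((k : ℝ) - c) = 0)
    (M2 : ∑ k ∈ range N, W k * ((k : ℝ) - c) ^ 2 = σ ^ 2)
    (M3l : -σ ^ 2 ≤ ∑ k ∈ range N, W k * ((k : ℝ) - c) ^ 3)
    (M3u : ∑ k ∈ range N, W k * ((k : ℝ) - c) ^ 3 ≤ σ ^ 2)
    (M4 : ∑ k ∈ range N, W k * ((k : ℝ) - c) ^ 4 ≤ 3 * σ ^ 4 + σ ^ 2) :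
    1 / 110592 ≤ ∑ k ∈ range N, if 1 / 2 * σ ≤ (k : ℝ) - c then W k else 0 := by
  have hσ0 : 0 < σ := by linarith
  set g : ℕ → ℝ := fun k => if 1 / 2 * σ ≤ (k : ℝ) - c then (k : ℝ) - c + 2 * σ else 0 with hg
  set P := ∑ k ∈ range N, if 1 / 2 * σ ≤ (k : ℝ) - c then W k else 0 with hP
  set G2 := ∑ k ∈ range N, W k * g k ^ 2 with hG2
  set G3 := ∑ k ∈ range N, W k * g k ^ 3 with hG3
  set G4 := ∑ k ∈ range N, W k * g k ^ 4 with hG4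
  set S3 := ∑ k ∈ range N, W k * ((k : ℝ) - c) ^ 3 with hS3
  -- the cubic polynomial sum
  have hEq : ∑ k ∈ range N, W k * ((((k:ℝ) - c) - 1/2*σ) * (((k:ℝ) - c) + 2*σ) ^ 2)
      = S3 + (7/2*σ) * (∑ k ∈ range N, W k * ((k : ℝ) - c) ^ 2)
        + (2*σ^2) * (∑ k ∈ range N, W k * ((k : ℝ) - c))
        - (2*σ^3) * (∑ k ∈ range N, W k) := by
    rw [hS3, Finset.mul_sum, Finset.mul_sum, Finset.mul_sum, ← Finset.sum_add_distrib,
      ← Finset.sum_add_distrib, ← Finset.sum_sub_distrib]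
    exact Finset.sum_congr rfl fun k _ => by ring
  have hEqlb : σ ^ 3
      ≤ ∑ k ∈ range N, W k * ((((k:ℝ) - c) - 1/2*σ) * (((k:ℝ) - c) + 2*σ) ^ 2) := by
    rw [hEq, M2, M1, E0]
    have h1 : 2 * σ^2 ≤ σ^3 := by nlinarith [mul_nonneg (sq_nonneg σ) (show (0:ℝ) ≤ σ - 2 by linarith)]
    nlinarith [M3l]
  have hEqG3 : (∑ k ∈ range N, W k * ((((k:ℝ) - c) - 1/2*σ) * (((k:ℝ) - c) + 2*σ) ^ 2))
      ≤ G3 := by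
    rw [hG3]
    apply Finset.sum_le_sum
    intro k _
    by_cases h : 1 / 2 * σ ≤ (k : ℝ) - c
    · have hgk : g k = (k : ℝ) - c + 2 * σ := by rw [hg]; simp only [if_pos h]
      rw [hgk]
      have h1 : (0:ℝ) ≤ (k:ℝ) - c + 2*σ := by linarith
      have h2 := hW k
      nlinarith [mul_nonneg (mul_nonneg h2 (show (0:ℝ) ≤ 2*σ + 1/2*σ by linarith))
        (sq_nonneg ((k:ℝ) - c + 2*σ))]
    · have hgk : g k = 0 := by rw [hg]; simp only [if_neg h]
      rw [hgk]
      push_neg at h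
      have h2 := hW k
      nlinarith [mul_nonneg (mul_nonneg h2 (show (0:ℝ) ≤ 1/2*σ - ((k:ℝ) - c) by linarith))
        (sq_nonneg ((k:ℝ) - c + 2*σ))]
  have hG3lb : σ ^ 3 ≤ G3 := le_trans hEqlb hEqG3
  have hG4ub : G4 ≤ 48 * σ ^ 4 := by
    have step1 : G4 ≤ ∑ k ∈ range N, W k * (((k:ℝ) - c) + 2*σ) ^ 4 := by
      rw [hG4]; apply Finset.sum_le_sum; intro k _
      by_cases h : 1 / 2 * σ ≤ (k : ℝ) - c
      · rw [show g k = (k : ℝ) - c + 2 * σ by rw [hg]; simp only [if_pos h]]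
      · rw [show g k = 0 by rw [hg]; simp only [if_neg h]]
        have h2 := hW k
        have : (0:ℝ) ≤ ((k:ℝ) - c + 2*σ) ^ 4 := by positivity
        nlinarith
    have step2 : ∑ k ∈ range N, W k * (((k:ℝ) - c) + 2*σ) ^ 4
        = (∑ k ∈ range N, W k * ((k:ℝ) - c)^4) + (8*σ) * S3
          + (24*σ^2) * (∑ k ∈ range N, W k * ((k : ℝ) - c) ^ 2)
          + (32*σ^3) * (∑ k ∈ range N, W k * ((k : ℝ) - c))
          + (16*σ^4) * (∑ k ∈ range N, W k) := by
      rw [hS3, Finset.mul_sum, Finset.mul_sum, Finset.mul_sum, Finset.mul_sum,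
        ← Finset.sum_add_distrib, ← Finset.sum_add_distrib, ← Finset.sum_add_distrib,
        ← Finset.sum_add_distrib]
      exact Finset.sum_congr rfl fun k _ => by ring
    rw [step2, M2, M1, E0] at step1
    have hσsq4 : 4 ≤ σ ^ 2 := by nlinarith [sq_nonneg (σ - 2)]
    have h3 : σ^2 ≤ (1/4) * σ^4 := by
      nlinarith [mul_le_mul_of_nonneg_left hσsq4 (sq_nonneg σ)]
    have h4 : (8*σ) * S3 ≤ 8 * σ^3 := by
      have := mul_le_mul_of_nonneg_left M3u (show (0:ℝ) ≤ 8*σ by linarith)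
      nlinarith [this]
    have h5 : 8 * σ^3 ≤ 4 * σ^4 := by
      nlinarith [mul_le_mul_of_nonneg_left hσ2 (show (0:ℝ) ≤ σ^3 by positivity)]
    linarith [M4, step1, h3, h4, h5]
  -- Cauchy-Schwarz 1
  have CS1 : G3 ^ 2 ≤ G2 * G4 := by
    rw [hG2, hG3, hG4]
    have h := Finset.sum_mul_sq_le_sq_mul_sq (range N)
      (fun k => Real.sqrt (W k) * g k) (fun k => Real.sqrt (W k) * g k ^ 2)
    have e1 : ∑ k ∈ range N, (Real.sqrt (W k) * g k) * (Real.sqrt (W k) * g k ^ 2)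
        = ∑ k ∈ range N, W k * g k ^ 3 :=
      Finset.sum_congr rfl fun k _ => by
        rw [show (Real.sqrt (W k) * g k) * (Real.sqrt (W k) * g k ^ 2)
            = (Real.sqrt (W k) * Real.sqrt (W k)) * g k ^ 3 by ring,
          Real.mul_self_sqrt (hW k)]
    have e2 : ∑ k ∈ range N, (Real.sqrt (W k) * g k) ^ 2
        = ∑ k ∈ range N, W k * g k ^ 2 :=
      Finset.sum_congr rfl fun k _ => by
        rw [show (Real.sqrt (W k) * g k) ^ 2
            = (Real.sqrt (W k) * Real.sqrt (W k)) * g k ^ 2 by ring,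
          Real.mul_self_sqrt (hW k)]
    have e3 : ∑ k ∈ range N, (Real.sqrt (W k) * g k ^ 2) ^ 2
        = ∑ k ∈ range N, W k * g k ^ 4 :=
      Finset.sum_congr rfl fun k _ => by
        rw [show (Real.sqrt (W k) * g k ^ 2) ^ 2
            = (Real.sqrt (W k) * Real.sqrt (W k)) * g k ^ 4 by ring,
          Real.mul_self_sqrt (hW k)]
    rw [e1, e2, e3] at h
    exact h
  -- Cauchy-Schwarz 2
  have CS2 : G2 ^ 2 ≤ P * G4 := by
    rw [hG2, hG4, hP]
    have h := Finset.sum_mul_sq_le_sq_mul_sq (range N)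
      (fun k => if 1 / 2 * σ ≤ (k : ℝ) - c then Real.sqrt (W k) else 0)
      (fun k => Real.sqrt (W k) * g k ^ 2)
    have e1 : ∑ k ∈ range N,
        (if 1 / 2 * σ ≤ (k : ℝ) - c then Real.sqrt (W k) else 0) * (Real.sqrt (W k) * g k ^ 2)
        = ∑ k ∈ range N, W k * g k ^ 2 := by
      refine Finset.sum_congr rfl fun k _ => ?_
      by_cases hk : 1 / 2 * σ ≤ (k : ℝ) - c
      · rw [if_pos hk,
          show Real.sqrt (W k) * (Real.sqrt (W k) * g k ^ 2)
            = (Real.sqrt (W k) * Real.sqrt (W k)) * g k ^ 2 by ring,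
          Real.mul_self_sqrt (hW k)]
      · rw [if_neg hk, show g k = 0 by rw [hg]; simp only [if_neg hk]]
        ring
    have e2 : ∑ k ∈ range N,
        (if 1 / 2 * σ ≤ (k : ℝ) - c then Real.sqrt (W k) else 0) ^ 2
        = ∑ k ∈ range N, (if 1 / 2 * σ ≤ (k : ℝ) - c then W k else 0) := by
      refine Finset.sum_congr rfl fun k _ => ?_
      by_cases hk : 1 / 2 * σ ≤ (k : ℝ) - c
      · rw [if_pos hk, if_pos hk, sq, Real.mul_self_sqrt (hW k)]
      · rw [if_neg hk, if_neg hk]; ring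
    have e3 : ∑ k ∈ range N, (Real.sqrt (W k) * g k ^ 2) ^ 2
        = ∑ k ∈ range N, W k * g k ^ 4 :=
      Finset.sum_congr rfl fun k _ => by
        rw [show (Real.sqrt (W k) * g k ^ 2) ^ 2
            = (Real.sqrt (W k) * Real.sqrt (W k)) * g k ^ 4 by ring,
          Real.mul_self_sqrt (hW k)]
    rw [e1, e2, e3] at h
    exact h
  -- nonnegativity
  have hPnn : 0 ≤ P := by
    rw [hP]
    apply Finset.sum_nonneg
    intro k _
    by_cases hk : 1 / 2 * σ ≤ (k : ℝ) - c
    · rw [if_pos hk]; exact hW k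
    · rw [if_neg hk]
  have hG4nn : 0 ≤ G4 := by
    rw [hG4]
    exact Finset.sum_nonneg fun k _ => mul_nonneg (hW k) (by positivity)
  have key : σ ^ 12 ≤ P * (48 * σ ^ 4) ^ 3 := by
    calc σ ^ 12 = (σ ^ 3) ^ 4 := by ring
    _ ≤ G3 ^ 4 := pow_le_pow_left₀ (by positivity) hG3lb 4
    _ = (G3 ^ 2) ^ 2 := by ring
    _ ≤ (G2 * G4) ^ 2 := pow_le_pow_left₀ (sq_nonneg _) CS1 2
    _ = G2 ^ 2 * G4 ^ 2 := by ring
    _ ≤ (P * G4) * G4 ^ 2 := mul_le_mul_of_nonneg_right CS2 (sq_nonneg _)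
    _ = P * G4 ^ 3 := by ring
    _ ≤ P * (48 * σ ^ 4) ^ 3 :=
        mul_le_mul_of_nonneg_left (pow_le_pow_left₀ hG4nn hG4ub 3) hPnn
  have hσ12 : (0:ℝ) < σ ^ 12 := by positivity
  nlinarith [key, hσ12]

lemma core (n : ℕ) (p q : ℝ) (hp0 : 0 < p) (hq0 : 0 < q) (hpq : p + q = 1)
    (hv : 4 ≤ (n : ℝ) * p * q) :
    1 / 110592 ≤ ∑ k ∈ range (n + 1),
      if 1 / 2 * Real.sqrt ((n : ℝ) * p * q) ≤ (k : ℝ) - (n : ℝ) * p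
      then (n.choose k : ℝ) * p ^ k * q ^ (n - k) else 0 := by
  have hv0 : (0:ℝ) < (n : ℝ) * p * q := by linarith
  have hσsq : Real.sqrt ((n : ℝ) * p * q) ^ 2 = (n : ℝ) * p * q := Real.sq_sqrt hv0.le
  have hσ0 : 0 < Real.sqrt ((n : ℝ) * p * q) := Real.sqrt_pos.mpr hv0
  have hσ2 : 2 ≤ Real.sqrt ((n : ℝ) * p * q) := by nlinarith [hσsq, hv, hσ0]
  have hW : ∀ k : ℕ, 0 ≤ (n.choose k : ℝ) * p ^ k * q ^ (n - k) := fun k => by positivity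
  have hq1 : q = 1 - p := by linarith
  have hp1 : p ≤ 1 := by linarith
  -- expectations of descending factorials
  have hE : ∀ j : ℕ, ∑ k ∈ range (n + 1),
      ((n.choose k : ℝ) * p ^ k * q ^ (n - k)) * (k.descFactorial j : ℝ)
        = (n.descFactorial j : ℝ) * p ^ j := fun j => sum_desc n j p q hpq
  have E0 : ∑ k ∈ range (n + 1), (n.choose k : ℝ) * p ^ k * q ^ (n - k) = 1 := by
    have h := hE 0
    simpa using h
  have E1 : ∑ k ∈ range (n + 1),
      ((n.choose k : ℝ) * p ^ k * q ^ (n - k)) * (k : ℝ) = (n : ℝ) * p := by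
    have h := hE 1
    simpa [Nat.descFactorial_one] using h
  have E2 : ∑ k ∈ range (n + 1),
      ((n.choose k : ℝ) * p ^ k * q ^ (n - k)) * ((k : ℝ) * ((k:ℝ) - 1))
        = (n : ℝ) * ((n:ℝ) - 1) * p ^ 2 := by
    have h := hE 2
    rw [df2 n] at h
    rw [← h]
    exact Finset.sum_congr rfl fun k _ => by rw [df2 k]
  have E3 : ∑ k ∈ range (n + 1),
      ((n.choose k : ℝ) * p ^ k * q ^ (n - k)) * ((k : ℝ) * ((k:ℝ) - 1) * ((k:ℝ) - 2))
        = (n : ℝ) * ((n:ℝ) - 1) * ((n:ℝ) - 2) * p ^ 3 := by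
    have h := hE 3
    rw [df3 n] at h
    rw [← h]
    exact Finset.sum_congr rfl fun k _ => by rw [df3 k]
  have E4 : ∑ k ∈ range (n + 1),
      ((n.choose k : ℝ) * p ^ k * q ^ (n - k))
        * ((k : ℝ) * ((k:ℝ) - 1) * ((k:ℝ) - 2) * ((k:ℝ) - 3))
        = (n : ℝ) * ((n:ℝ) - 1) * ((n:ℝ) - 2) * ((n:ℝ) - 3) * p ^ 4 := by
    have h := hE 4
    rw [df4 n] at h
    rw [← h]
    exact Finset.sum_congr rfl fun k _ => by rw [df4 k]
  -- central moments
  have M1 : ∑ k ∈ range (n + 1),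
      ((n.choose k : ℝ) * p ^ k * q ^ (n - k)) * ((k : ℝ) - (n : ℝ) * p) = 0 := by
    have expand : ∑ k ∈ range (n + 1),
        ((n.choose k : ℝ) * p ^ k * q ^ (n - k)) * ((k : ℝ) - (n : ℝ) * p)
        = (∑ k ∈ range (n + 1), ((n.choose k : ℝ) * p ^ k * q ^ (n - k)) * (k : ℝ))
          - ((n : ℝ) * p) * (∑ k ∈ range (n + 1), (n.choose k : ℝ) * p ^ k * q ^ (n - k)) := by
      rw [Finset.mul_sum, ← Finset.sum_sub_distrib]
      exact Finset.sum_congr rfl fun k _ => by ring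
    rw [expand, E1, E0]; ring
  have M2 : ∑ k ∈ range (n + 1),
      ((n.choose k : ℝ) * p ^ k * q ^ (n - k)) * ((k : ℝ) - (n : ℝ) * p) ^ 2
        = Real.sqrt ((n : ℝ) * p * q) ^ 2 := by
    have expand : ∑ k ∈ range (n + 1),
        ((n.choose k : ℝ) * p ^ k * q ^ (n - k)) * ((k : ℝ) - (n : ℝ) * p) ^ 2
        = (∑ k ∈ range (n + 1),
            ((n.choose k : ℝ) * p ^ k * q ^ (n - k)) * ((k : ℝ) * ((k:ℝ) - 1)))
          + (1 - 2 * ((n : ℝ) * p)) * (∑ k ∈ range (n + 1),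
            ((n.choose k : ℝ) * p ^ k * q ^ (n - k)) * (k : ℝ))
          + ((n : ℝ) * p) ^ 2 * (∑ k ∈ range (n + 1),
            (n.choose k : ℝ) * p ^ k * q ^ (n - k)) := by
      rw [Finset.mul_sum, Finset.mul_sum, ← Finset.sum_add_distrib, ← Finset.sum_add_distrib]
      exact Finset.sum_congr rfl fun k _ => by ring
    rw [expand, E2, E1, E0, hσsq, hq1]; ring
  have M3 : ∑ k ∈ range (n + 1),
      ((n.choose k : ℝ) * p ^ k * q ^ (n - k)) * ((k : ℝ) - (n : ℝ) * p) ^ 3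
        = ((n : ℝ) * p * q) * (1 - 2 * p) := by
    have expand : ∑ k ∈ range (n + 1),
        ((n.choose k : ℝ) * p ^ k * q ^ (n - k)) * ((k : ℝ) - (n : ℝ) * p) ^ 3
        = (∑ k ∈ range (n + 1),
            ((n.choose k : ℝ) * p ^ k * q ^ (n - k)) * ((k : ℝ) * ((k:ℝ) - 1) * ((k:ℝ) - 2)))
          + (3 - 3 * ((n : ℝ) * p)) * (∑ k ∈ range (n + 1),
            ((n.choose k : ℝ) * p ^ k * q ^ (n - k)) * ((k : ℝ) * ((k:ℝ) - 1)))
          + (1 - 3 * ((n : ℝ) * p) + 3 * ((n : ℝ) * p) ^ 2) * (∑ k ∈ range (n + 1),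
            ((n.choose k : ℝ) * p ^ k * q ^ (n - k)) * (k : ℝ))
          - ((n : ℝ) * p) ^ 3 * (∑ k ∈ range (n + 1),
            (n.choose k : ℝ) * p ^ k * q ^ (n - k)) := by
      rw [Finset.mul_sum, Finset.mul_sum, Finset.mul_sum, ← Finset.sum_add_distrib,
        ← Finset.sum_add_distrib, ← Finset.sum_sub_distrib]
      exact Finset.sum_congr rfl fun k _ => by ring
    rw [expand, E3, E2, E1, E0, hq1]; ring
  have M4 : ∑ k ∈ range (n + 1),
      ((n.choose k : ℝ) * p ^ k * q ^ (n - k)) * ((k : ℝ) - (n : ℝ) * p) ^ 4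
        = 3 * ((n : ℝ) * p * q) ^ 2 + ((n : ℝ) * p * q) * (1 - 6 * p * q) := by
    have expand : ∑ k ∈ range (n + 1),
        ((n.choose k : ℝ) * p ^ k * q ^ (n - k)) * ((k : ℝ) - (n : ℝ) * p) ^ 4
        = (∑ k ∈ range (n + 1), ((n.choose k : ℝ) * p ^ k * q ^ (n - k))
            * ((k : ℝ) * ((k:ℝ) - 1) * ((k:ℝ) - 2) * ((k:ℝ) - 3)))
          + (6 - 4 * ((n : ℝ) * p)) * (∑ k ∈ range (n + 1),
            ((n.choose k : ℝ) * p ^ k * q ^ (n - k)) * ((k : ℝ) * ((k:ℝ) - 1) * ((k:ℝ) - 2)))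
          + (7 - 12 * ((n : ℝ) * p) + 6 * ((n : ℝ) * p) ^ 2) * (∑ k ∈ range (n + 1),
            ((n.choose k : ℝ) * p ^ k * q ^ (n - k)) * ((k : ℝ) * ((k:ℝ) - 1)))
          + (1 - 4 * ((n : ℝ) * p) + 6 * ((n : ℝ) * p) ^ 2 - 4 * ((n : ℝ) * p) ^ 3)
            * (∑ k ∈ range (n + 1), ((n.choose k : ℝ) * p ^ k * q ^ (n - k)) * (k : ℝ))
          + ((n : ℝ) * p) ^ 4 * (∑ k ∈ range (n + 1),
            (n.choose k : ℝ) * p ^ k * q ^ (n - k)) := by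
      rw [Finset.mul_sum, Finset.mul_sum, Finset.mul_sum, Finset.mul_sum,
        ← Finset.sum_add_distrib, ← Finset.sum_add_distrib, ← Finset.sum_add_distrib,
        ← Finset.sum_add_distrib]
      exact Finset.sum_congr rfl fun k _ => by ring
    rw [expand, E4, E3, E2, E1, E0, hq1]; ring
  -- apply the abstract lemma
  have hpq0 : 0 ≤ p * q := by positivity
  have M3l : -Real.sqrt ((n : ℝ) * p * q) ^ 2 ≤ ∑ k ∈ range (n + 1),
      ((n.choose k : ℝ) * p ^ k * q ^ (n - k)) * ((k : ℝ) - (n : ℝ) * p) ^ 3 := by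
    rw [M3, hσsq]; nlinarith [hv0, hp0, hp1]
  have M3u : (∑ k ∈ range (n + 1),
      ((n.choose k : ℝ) * p ^ k * q ^ (n - k)) * ((k : ℝ) - (n : ℝ) * p) ^ 3)
        ≤ Real.sqrt ((n : ℝ) * p * q) ^ 2 := by
    rw [M3, hσsq]; nlinarith [hv0, hp0, hp1]
  have M4' : ∑ k ∈ range (n + 1),
      ((n.choose k : ℝ) * p ^ k * q ^ (n - k)) * ((k : ℝ) - (n : ℝ) * p) ^ 4
        ≤ 3 * Real.sqrt ((n : ℝ) * p * q) ^ 4 + Real.sqrt ((n : ℝ) * p * q) ^ 2 := by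
    rw [M4]
    have h4 : Real.sqrt ((n : ℝ) * p * q) ^ 4 = ((n : ℝ) * p * q) ^ 2 := by
      rw [show (4:ℕ) = 2 * 2 from rfl, pow_mul, hσsq]
    rw [h4, hσsq]
    nlinarith [hv0, hpq0]
  exact abs_lemma (n + 1) (fun k => (n.choose k : ℝ) * p ^ k * q ^ (n - k)) hW
    ((n : ℝ) * p) (Real.sqrt ((n : ℝ) * p * q)) hσ2 E0 M1 M2 M3l M3u M4'

theorem stmt8 :
    ∃ v₀ > (0 : ℝ), ∃ c₀ > (0 : ℝ),
      ∀ (n : ℕ) (p : ℝ) (hp0 : 0 < p) (hp1 : p < 1),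
        v₀ ≤ n * p * (1 - p) →
        ENNReal.ofReal c₀ ≤
          (PMF.binomial (Real.toNNReal p) (Real.toNNReal_le_one.mpr hp1.le) n).toMeasure
            {k | (1 / 2) * Real.sqrt (n * p * (1 - p)) ≤ (k : ℝ) - n * p} := by
  refine ⟨4, by norm_num, 1 / 110592, by norm_num, ?_⟩
  intro n p hp0 hp1 hv
  have hq0 : 0 < 1 - p := by linarith
  -- pmf values as ofReal
  have key : ∀ i : Fin (n + 1),
      (PMF.binomial (Real.toNNReal p) (Real.toNNReal_le_one.mpr hp1.le) n) i
        = ENNReal.ofReal ((n.choose (i : ℕ) : ℝ) * p ^ (i : ℕ) * (1 - p) ^ (n - (i : ℕ))) := by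
    intro i
    rw [PMF.binomial_apply, show ((p.toNNReal : NNReal) : ENNReal) = ENNReal.ofReal p from rfl]
    have h1p : (1 : ENNReal) - ENNReal.ofReal p = ENNReal.ofReal (1 - p) := by
      rw [ENNReal.ofReal_sub 1 hp0.le, ENNReal.ofReal_one]
    rw [Fin.val_last, h1p, ← ENNReal.ofReal_pow hp0.le, ← ENNReal.ofReal_pow hq0.le,
      ← ENNReal.ofReal_natCast (n.choose (i : ℕ)), ← ENNReal.ofReal_mul (by positivity),
      ← ENNReal.ofReal_mul (by positivity)]
    congr 1
    ring
  rw [PMF.toMeasure_apply_fintype]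
  have hind : ∀ i : Fin (n + 1),
      Set.indicator {k : Fin (n + 1) | (1 / 2) * Real.sqrt (n * p * (1 - p)) ≤ (k : ℝ) - n * p}
        (PMF.binomial (Real.toNNReal p) (Real.toNNReal_le_one.mpr hp1.le) n) i
        = ENNReal.ofReal (if (1 / 2) * Real.sqrt (n * p * (1 - p)) ≤ ((i : ℕ) : ℝ) - n * p
            then (n.choose (i : ℕ) : ℝ) * p ^ (i : ℕ) * (1 - p) ^ (n - (i : ℕ)) else 0) := by
    intro i
    by_cases hi : (1 / 2) * Real.sqrt (n * p * (1 - p)) ≤ ((i : ℕ) : ℝ) - n * p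
    · have him : i ∈ {k : Fin (n + 1) |
          (1 / 2) * Real.sqrt (n * p * (1 - p)) ≤ (k : ℝ) - n * p} := hi
      rw [Set.indicator_of_mem him, key i, if_pos hi]
    · have him : i ∉ {k : Fin (n + 1) |
          (1 / 2) * Real.sqrt (n * p * (1 - p)) ≤ (k : ℝ) - n * p} := hi
      rw [Set.indicator_of_notMem him, if_neg hi, ENNReal.ofReal_zero]
  rw [Finset.sum_congr rfl fun i _ => hind i,
    ← ENNReal.ofReal_sum_of_nonneg (fun i _ => by positivity)]
  refine ENNReal.ofReal_le_ofReal ?_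
  rw [Fin.sum_univ_eq_sum_range (fun k =>
    if (1 / 2) * Real.sqrt (n * p * (1 - p)) ≤ (k : ℝ) - n * p
    then (n.choose k : ℝ) * p ^ k * (1 - p) ^ (n - k) else 0) (n + 1)]
  exact core n p (1 - p) hp0 hq0 (by ring) hv
end
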